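/- Let H be a complex inner product space and let D be a linear subspace of H. Let a₁, a₂ : D × D → ℂ be symmetric sesquilinear forms (a_j(u,v) = conj(a_j(v,u)) for all u, v ∈ D) with a₁(u,u) ≤ a₂(u,u) for all u ∈ D. Let μ ∈ ℝ. Suppose F is a finite-dimensional subspace of D with a₂(u,u) ≤ μ‖u‖² for all u ∈ F, and K is a finite-dimensional subspace of D such that a₁(v,w) = μ⟨v,w⟩ for every v ∈ K and every w ∈ D, and F ∩ K = {0}. Define N₁(μ) as the supremum (in ℕ∞) of finrank L over all finite-dimensional subspaces L of D such that a₁(u,u) ≤ μ‖u‖² for all u ∈ L. Then N₁(μ) ≥ finrank F + finrank K. -/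

import Mathlib

open scoped InnerProductSpace ComplexOrder

/-- The counting quantity `N_a(μ)` for a sesquilinear form `a` on a subspace `D`:
the supremum (in `ℕ∞`) of `finrank L` over all finite-dimensional subspaces `L` of
`D` on which `a(u,u) ≤ μ‖u‖²`. -/
noncomputable def formCountingFunction {H : Type*} [NormedAddCommGroup H]
    [InnerProductSpace ℂ H] (D : Submodule ℂ H) (a : D →ₗ⋆[ℂ] D →ₗ[ℂ] ℂ) (μ : ℝ) : ℕ∞ :=
  ⨆ (L : {L : Submodule ℂ D // FiniteDimensional ℂ L ∧
      ∀ u ∈ L, a u u ≤ ((μ * ‖((u : D) : H)‖ ^ 2 : ℝ) : ℂ)}),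
    (Module.finrank ℂ L.1 : ℕ∞)

/-- let `a₁ ≤ a₂` be symmetric sesquilinear forms on `D`, `μ ∈ ℝ`,
`F` a finite-dimensional subspace with `a₂(u,u) ≤ μ‖u‖²` on `F`, `K` a
finite-dimensional subspace with `a₁(v,w) = μ⟨v,w⟩` for all `v ∈ K`, `w ∈ D`, and
`F ∩ K = {0}`. Then `N₁(μ) ≥ finrank F + finrank K`. -/
theorem formCountingFunction_ge {H : Type*} [NormedAddCommGroup H]
    [InnerProductSpace ℂ H] (D : Submodule ℂ H)
    (a₁ a₂ : D →ₗ⋆[ℂ] D →ₗ[ℂ] ℂ)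
    (hsym₁ : ∀ u v : D, a₁ u v = starRingEnd ℂ (a₁ v u))
    (hsym₂ : ∀ u v : D, a₂ u v = starRingEnd ℂ (a₂ v u))
    (h12 : ∀ u : D, a₁ u u ≤ a₂ u u)
    (μ : ℝ) (F K : Submodule ℂ D) [FiniteDimensional ℂ F] [FiniteDimensional ℂ K]
    (hF : ∀ u ∈ F, a₂ u u ≤ ((μ * ‖((u : D) : H)‖ ^ 2 : ℝ) : ℂ))
    (hK : ∀ v ∈ K, ∀ w : D, a₁ v w = (μ : ℂ) * ⟪(v : H), (w : H)⟫_ℂ)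
    (hFK : F ⊓ K = ⊥) :
    (Module.finrank ℂ F + Module.finrank ℂ K : ℕ∞) ≤ formCountingFunction D a₁ μ := by
  have hprop : ∀ u ∈ F ⊔ K, a₁ u u ≤ ((μ * ‖((u : D) : H)‖ ^ 2 : ℝ) : ℂ) := by
    intro u hu
    rcases Submodule.mem_sup.mp hu with ⟨f, hf, k, hk, rfl⟩
    set z : ℂ := ⟪((f : D) : H), ((k : D) : H)⟫_ℂ with hz
    have hkf : a₁ k f = (μ : ℂ) * (starRingEnd ℂ) z := by
      rw [hK k hk f, hz, inner_conj_symm]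
    have hkk : a₁ k k = (μ : ℂ) * ((‖((k : D) : H)‖ ^ 2 : ℝ) : ℂ) := by
      rw [hK k hk k, inner_self_eq_norm_sq_to_K]; simp [Submodule.coe_norm]
    have hfk : a₁ f k = (μ : ℂ) * z := by
      rw [hsym₁ f k, hK k hk f, map_mul, Complex.conj_ofReal, inner_conj_symm]
    have hexp : a₁ (f + k) (f + k)
        = a₁ f f + ((μ * (2 * z.re + ‖((k : D) : H)‖ ^ 2) : ℝ) : ℂ) := by
      have h4 : a₁ (f + k) (f + k) = a₁ f f + a₁ f k + a₁ k f + a₁ k k := by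
        simp only [map_add, LinearMap.add_apply]; ring
      have hcc : z + (starRingEnd ℂ) z = ((2 * z.re : ℝ) : ℂ) := Complex.add_conj z
      rw [h4, hfk, hkf, hkk]
      push_cast [← hcc]
      try ring
    have h1 : a₁ f f ≤ ((μ * ‖((f : D) : H)‖ ^ 2 : ℝ) : ℂ) := le_trans (h12 f) (hF f hf)
    have hnorm : ‖(((f + k : D)) : H)‖ ^ 2
        = ‖((f : D) : H)‖ ^ 2 + 2 * z.re + ‖((k : D) : H)‖ ^ 2 := by
      have := @norm_add_sq ℂ H _ _ _ ((f : D) : H) ((k : D) : H)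
      simpa [hz] using this
    calc a₁ (f + k) (f + k)
        ≤ ((μ * ‖((f : D) : H)‖ ^ 2 : ℝ) : ℂ)
            + ((μ * (2 * z.re + ‖((k : D) : H)‖ ^ 2) : ℝ) : ℂ) := by
          rw [hexp]; exact add_le_add_left h1 _
      _ = ((μ * ‖(((f + k : D)) : H)‖ ^ 2 : ℝ) : ℂ) := by
          rw [hnorm]; push_cast; ring
  haveI : FiniteDimensional ℂ (F ⊔ K : Submodule ℂ D) := inferInstance
  have hrank : Module.finrank ℂ (F ⊔ K : Submodule ℂ D)
      = Module.finrank ℂ F + Module.finrank ℂ K := by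
    have := Submodule.finrank_sup_add_finrank_inf_eq F K
    rw [hFK] at this
    simpa using this
  have hle := le_iSup (fun L : {L : Submodule ℂ D // FiniteDimensional ℂ L ∧
      ∀ u ∈ L, a₁ u u ≤ ((μ * ‖((u : D) : H)‖ ^ 2 : ℝ) : ℂ)} =>
      (Module.finrank ℂ L.1 : ℕ∞)) ⟨F ⊔ K, inferInstance, hprop⟩
  unfold formCountingFunction
  rw [← Nat.cast_add, ← hrank]
  exact hle
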